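/- Let E = {1,...,n}, let f be harmonic of degree d with extension f̃, and let C ⊆ F_q^n be a linear code. Define Z_{C,f}^{[m]}(x,y) = ∑_{X ⊆ E, d ≤ |X| ≤ n−d} f̃(X) A_C^{[m]}(X) x^{|E−X|−d} y^{|X|−d}. Then Z_{C,f}^{[m]}(x,y) = (−1)^d ∑_{X ⊆ E, d ≤ |X| ≤ n−d} f̃(X) q^{m(α_C(E) − α_C(X))} (x−y)^{|X|−d} y^{|E−X|−d}, where α_C(X) = log_q |C\(E−X)|. -/

import Mathlib

open Finset

variable {ι F : Type*} [Fintype ι] [DecidableEq ι] [Field F] [Fintype F] [DecidableEq F]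

/-- `f` is harmonic of degree `d`. -/
def IsHarmonic (d : ℕ) (f : Finset ι → ℝ) : Prop :=
  ∀ Y : Finset ι, Y.card + 1 = d →
    ∑ Z ∈ Finset.univ.filter (fun Z : Finset ι => Z.card = d ∧ Y ⊆ Z), f Z = 0

/-- The extension `f̃(X) = ∑_{Z ⊆ X, |Z| = d} f(Z)`. -/
def tilde (d : ℕ) (f : Finset ι → ℝ) (X : Finset ι) : ℝ :=
  ∑ Z ∈ X.powerset.filter (fun Z : Finset ι => Z.card = d), f Z

/-- Projection of `F^ι` onto the coordinates in `X`. -/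
def proj (F : Type*) [Field F] (X : Finset ι) : (ι → F) →ₗ[F] ({i // i ∈ X} → F) :=
  LinearMap.funLeft F F (fun i => i.1)

/-- The support of a vector. -/
def supp (v : ι → F) : Finset ι := Finset.univ.filter (fun i => v i ≠ 0)

/-- `A_C^{[m]}(X)`: the number of `m`-tuples of codewords whose supports union to `X`. -/
noncomputable def Acount (C : Submodule F (ι → F)) (m : ℕ) (X : Finset ι) : ℕ :=
  Nat.card {u : Fin m → C // (Finset.univ.biUnion fun j => supp ((u j : ι → F))) = X}

/-- `Z_{C,f}^{[m]}(x,y) = ∑_{X, d ≤ |X| ≤ n-d} f̃(X) A_C^{[m]}(X) x^{|E-X|-d} y^{|X|-d}`. -/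
noncomputable def Zcode (C : Submodule F (ι → F)) (m d : ℕ) (f : Finset ι → ℝ)
    (x y : ℝ) : ℝ :=
  ∑ X ∈ Finset.univ.filter
      (fun X : Finset ι => d ≤ X.card ∧ X.card ≤ Fintype.card ι - d),
    tilde d f X * (Acount C m X : ℝ) * x ^ (Xᶜ.card - d) * y ^ (X.card - d)

/-- `α_C(X) = log_q |C \ (E - X)|`, the log-size of the projection of `C` onto `X`. -/
noncomputable def alphaC (C : Submodule F (ι → F)) (q : ℕ) (X : Finset ι) : ℝ :=
  Real.logb q (Nat.card (C.map (proj F X)))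


set_option linter.unusedSectionVars false

section AuxComb

lemma card_between (Z T : Finset ι) (hZT : Z ⊆ T) (i : ℕ) (hi : Z.card ≤ i) :
    ((T.powerset.filter fun X => X.card = i ∧ Z ⊆ X)).card
      = (T.card - Z.card).choose (i - Z.card) := by
  rw [← Finset.card_sdiff_of_subset hZT, ← Finset.card_powersetCard]
  apply Finset.card_bij' (fun X _ => X \ Z) (fun Y _ => Y ∪ Z)
  · intro X hX
    simp only [mem_filter, mem_powerset] at hX
    obtain ⟨hXT, hcard, hZX⟩ := hX
    rw [mem_powersetCard]
    exact ⟨sdiff_subset_sdiff hXT le_rfl, by rw [card_sdiff_of_subset hZX, hcard]⟩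
  · intro Y hY
    rw [mem_powersetCard] at hY
    obtain ⟨hYT, hYcard⟩ := hY
    have hdisj : Disjoint Y Z := disjoint_of_subset_left hYT sdiff_disjoint
    simp only [mem_filter, mem_powerset]
    refine ⟨union_subset (hYT.trans sdiff_subset) hZT, ?_, subset_union_right⟩
    rw [card_union_of_disjoint hdisj, hYcard]
    omega
  · intro X hX
    simp only [mem_filter, mem_powerset] at hX
    exact sdiff_union_of_subset hX.2.2
  · intro Y hY
    rw [mem_powersetCard] at hY
    have hdisj : Disjoint Y Z := disjoint_of_subset_left hY.1 sdiff_disjoint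
    exact union_sdiff_cancel_right hdisj

/-- generic swap lemma -/
lemma swap_up (s : Finset (Finset ι)) (g : Finset ι → ℝ) (d : ℕ) (f : Finset ι → ℝ) :
    ∑ W ∈ s, g W * ∑ Z ∈ univ.filter (fun Z : Finset ι => Z.card = d ∧ W ⊆ Z), f Z
      = ∑ Z ∈ univ.filter (fun Z : Finset ι => Z.card = d),
          (∑ W ∈ s.filter (fun W => W ⊆ Z), g W) * f Z := by
  have h1 : ∀ W : Finset ι, univ.filter (fun Z : Finset ι => Z.card = d ∧ W ⊆ Z)
      = (univ.filter (fun Z : Finset ι => Z.card = d)).filter (fun Z => W ⊆ Z) := by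
    intro W; rw [filter_filter]
  calc ∑ W ∈ s, g W * ∑ Z ∈ univ.filter (fun Z : Finset ι => Z.card = d ∧ W ⊆ Z), f Z
      = ∑ W ∈ s, ∑ Z ∈ univ.filter (fun Z : Finset ι => Z.card = d),
          (if W ⊆ Z then g W * f Z else 0) := by
        refine sum_congr rfl fun W _ => ?_
        rw [h1 W, mul_sum, ← sum_filter]
    _ = ∑ Z ∈ univ.filter (fun Z : Finset ι => Z.card = d), ∑ W ∈ s,
          (if W ⊆ Z then g W * f Z else 0) := Finset.sum_comm
    _ = _ := by
        refine sum_congr rfl fun Z _ => ?_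
        rw [sum_mul, ← sum_filter]

lemma harm_sum {d : ℕ} {f : Finset ι → ℝ} (hf : IsHarmonic d f) :
    ∀ (k : ℕ) (W : Finset ι), W.card + (k + 1) = d →
      ∑ Z ∈ univ.filter (fun Z : Finset ι => Z.card = d ∧ W ⊆ Z), f Z = 0 := by
  intro k
  induction k with
  | zero => intro W hW; exact hf W hW
  | succ k ih =>
    intro W hW
    set s : Finset (Finset ι) :=
      univ.filter (fun Y : Finset ι => Y.card = W.card + 1 ∧ W ⊆ Y) with hs
    have h0 : ∑ Y ∈ s, (1 : ℝ) * ∑ Z ∈ univ.filter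
        (fun Z : Finset ι => Z.card = d ∧ Y ⊆ Z), f Z = 0 := by
      apply Finset.sum_eq_zero
      intro Y hY
      rw [hs, mem_filter] at hY
      rw [one_mul, ih Y (by omega)]
    rw [swap_up] at h0
    have h2 : ∀ Z ∈ univ.filter (fun Z : Finset ι => Z.card = d),
        (∑ W' ∈ s.filter (fun W' => W' ⊆ Z), (1:ℝ)) * f Z
          = ((d - W.card : ℕ) : ℝ) * (if W ⊆ Z then f Z else 0) := by
      intro Z hZ
      rw [mem_filter] at hZ
      by_cases hWZ : W ⊆ Z
      · rw [if_pos hWZ, sum_const, nsmul_eq_mul, mul_one]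
        congr 2
        have : s.filter (fun W' => W' ⊆ Z)
            = Z.powerset.filter (fun Y => Y.card = W.card + 1 ∧ W ⊆ Y) := by
          rw [hs]; ext Y
          simp only [mem_filter, mem_powerset, mem_univ, true_and]
          tauto
        rw [this, card_between W Z hWZ (W.card + 1) (by omega)]
        simp [hZ.2, Nat.add_sub_cancel_left]
      · rw [if_neg hWZ, mul_zero]
        have he : s.filter (fun W' => W' ⊆ Z) = ∅ := by
          rw [Finset.eq_empty_iff_forall_notMem]
          intro Y hY
          rw [hs, filter_filter, mem_filter] at hY
          exact hWZ (hY.2.1.2.trans hY.2.2)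
        rw [he]
        simp
    rw [Finset.sum_congr rfl h2] at h0
    rw [← Finset.mul_sum, ← Finset.sum_filter, filter_filter] at h0
    have hpos : ((d - W.card : ℕ) : ℝ) ≠ 0 := by
      have : d - W.card = k + 2 := by omega
      rw [this]; positivity
    exact (mul_eq_zero.mp h0).resolve_left hpos

lemma harm_vanish {d : ℕ} {f : Finset ι → ℝ} (hf : IsHarmonic d f) (W : Finset ι)
    (hW : W.card < d) :
    ∑ Z ∈ univ.filter (fun Z : Finset ι => Z.card = d ∧ W ⊆ Z), f Z = 0 :=
  harm_sum hf (d - W.card - 1) W (by omega)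

lemma tilde_small {d : ℕ} (f : Finset ι → ℝ) (X : Finset ι) (hX : X.card < d) :
    tilde d f X = 0 := by
  rw [tilde]
  apply Finset.sum_eq_zero
  intro Z hZ
  rw [mem_filter, mem_powerset] at hZ
  have := Finset.card_le_card hZ.1
  omega

lemma inner_eval {d : ℕ} {f : Finset ι → ℝ} (hf : IsHarmonic d f) (hd : 0 < d)
    (W : Finset ι) :
    ∑ Z ∈ univ.filter (fun Z : Finset ι => Z.card = d ∧ W ⊆ Z), f Z
      = if W.card = d then f W else 0 := by
  rcases lt_trichotomy W.card d with h | h | h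
  · rw [harm_vanish hf W h, if_neg (by omega)]
  · rw [if_pos h]
    have : univ.filter (fun Z : Finset ι => Z.card = d ∧ W ⊆ Z) = {W} := by
      ext Z
      simp only [mem_filter, mem_univ, true_and, mem_singleton]
      constructor
      · rintro ⟨h1, h2⟩
        exact (Finset.eq_of_subset_of_card_le h2 (by omega)).symm
      · rintro rfl; exact ⟨h, subset_rfl⟩
    rw [this, sum_singleton]
  · rw [if_neg (by omega)]
    apply Finset.sum_eq_zero
    intro Z hZ
    rw [mem_filter] at hZ
    have := Finset.card_le_card hZ.2.2
    omega

lemma subset_compl_iff_inter (Z T : Finset ι) : Z ⊆ Tᶜ ↔ T ∩ Z = ∅ := by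
  simp only [Finset.subset_iff, Finset.mem_compl, Finset.eq_empty_iff_forall_notMem,
    Finset.mem_inter]
  tauto

lemma tilde_compl {d : ℕ} {f : Finset ι → ℝ} (hf : IsHarmonic d f) (T : Finset ι) :
    tilde d f Tᶜ = (-1 : ℝ) ^ d * tilde d f T := by
  rcases Nat.eq_zero_or_pos d with hd | hd
  · subst hd
    simp only [pow_zero, one_mul, tilde]
    have h : ∀ X : Finset ι, X.powerset.filter (fun Z : Finset ι => Z.card = 0) = {∅} := by
      intro X
      ext Z
      simp only [mem_filter, mem_powerset, mem_singleton, Finset.card_eq_zero]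
      constructor
      · rintro ⟨_, h⟩; exact h
      · rintro rfl; exact ⟨empty_subset _, rfl⟩
    rw [h, h]
  have key := swap_up T.powerset (fun W => (-1 : ℝ) ^ W.card) d f
  have hA : ∑ W ∈ T.powerset, (-1 : ℝ) ^ W.card *
      ∑ Z ∈ univ.filter (fun Z : Finset ι => Z.card = d ∧ W ⊆ Z), f Z
        = (-1 : ℝ) ^ d * tilde d f T := by
    calc ∑ W ∈ T.powerset, (-1 : ℝ) ^ W.card *
        ∑ Z ∈ univ.filter (fun Z : Finset ι => Z.card = d ∧ W ⊆ Z), f Z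
        = ∑ W ∈ T.powerset, (if W.card = d then (-1 : ℝ) ^ d * f W else 0) := by
          refine sum_congr rfl fun W _ => ?_
          rw [inner_eval hf hd W]
          split_ifs with h
          · rw [h]
          · rw [mul_zero]
      _ = ∑ W ∈ T.powerset.filter (fun W : Finset ι => W.card = d), (-1 : ℝ) ^ d * f W :=
          (sum_filter _ _).symm
      _ = (-1 : ℝ) ^ d * tilde d f T := by rw [tilde, mul_sum]
  have hB : ∑ Z ∈ univ.filter (fun Z : Finset ι => Z.card = d),
      (∑ W ∈ T.powerset.filter (fun W => W ⊆ Z), (-1 : ℝ) ^ W.card) * f Z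
        = tilde d f Tᶜ := by
    have h2 : ∀ Z : Finset ι, ∑ W ∈ T.powerset.filter (fun W => W ⊆ Z), (-1 : ℝ) ^ W.card
        = if Z ⊆ Tᶜ then 1 else 0 := by
      intro Z
      have hps : T.powerset.filter (fun W => W ⊆ Z) = (T ∩ Z).powerset := by
        ext W
        simp only [mem_filter, mem_powerset, subset_inter_iff]
      rw [hps]
      have hcast : ∑ W ∈ (T ∩ Z).powerset, (-1 : ℝ) ^ W.card
          = ((∑ W ∈ (T ∩ Z).powerset, (-1 : ℤ) ^ W.card : ℤ) : ℝ) := by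
        push_cast
        rfl
      rw [hcast, Finset.sum_powerset_neg_one_pow_card]
      by_cases h : T ∩ Z = ∅
      · rw [if_pos h, if_pos ((subset_compl_iff_inter Z T).mpr h)]
        norm_num
      · rw [if_neg h, if_neg (fun hc => h ((subset_compl_iff_inter Z T).mp hc))]
        norm_num
    calc ∑ Z ∈ univ.filter (fun Z : Finset ι => Z.card = d),
        (∑ W ∈ T.powerset.filter (fun W => W ⊆ Z), (-1 : ℝ) ^ W.card) * f Z
        = ∑ Z ∈ univ.filter (fun Z : Finset ι => Z.card = d),
            (if Z ⊆ Tᶜ then f Z else 0) := by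
          refine sum_congr rfl fun Z _ => ?_
          rw [h2 Z]
          split_ifs <;> simp
      _ = ∑ Z ∈ (univ.filter (fun Z : Finset ι => Z.card = d)).filter
            (fun Z => Z ⊆ Tᶜ), f Z := (sum_filter _ _).symm
      _ = tilde d f Tᶜ := by
          rw [tilde]
          congr 1
          ext Z
          simp only [mem_filter, mem_powerset, mem_univ, true_and]
          tauto
  rw [hA, hB] at key
  exact key.symm

lemma tilde_sum {d : ℕ} (f : Finset ι → ℝ) (T : Finset ι) (i : ℕ) (hd : d ≤ i) :
    ∑ X ∈ T.powerset.filter (fun X : Finset ι => X.card = i), tilde d f X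
      = ((T.card - d).choose (i - d) : ℝ) * tilde d f T := by
  have h1 : ∀ X ∈ T.powerset.filter (fun X : Finset ι => X.card = i),
      tilde d f X = ∑ Z ∈ T.powerset.filter (fun Z : Finset ι => Z.card = d),
        (if Z ⊆ X then f Z else 0) := by
    intro X hX
    rw [mem_filter, mem_powerset] at hX
    rw [tilde, ← sum_filter]
    congr 1
    ext Z
    simp only [mem_filter, mem_powerset]
    constructor
    · rintro ⟨h2, h3⟩; exact ⟨⟨h2.trans hX.1, h3⟩, h2⟩
    · rintro ⟨⟨_, h3⟩, h2⟩; exact ⟨h2, h3⟩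
  rw [sum_congr rfl h1, Finset.sum_comm]
  rw [tilde, mul_sum, sum_congr rfl]
  intro Z hZ
  rw [mem_filter, mem_powerset] at hZ
  rw [← sum_filter, sum_const]
  have : (T.powerset.filter (fun X : Finset ι => X.card = i)).filter (fun X => Z ⊆ X)
      = T.powerset.filter (fun X : Finset ι => X.card = i ∧ Z ⊆ X) := by
    rw [filter_filter]
  rw [this, card_between Z T hZ.1 i (by omega), hZ.2, nsmul_eq_mul]

lemma keyY {d : ℕ} {f : Finset ι → ℝ} (hf : IsHarmonic d f) (x y : ℝ) (Y : Finset ι) :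
    ∑ X ∈ univ.filter (fun X : Finset ι =>
        (d ≤ X.card ∧ X.card ≤ Fintype.card ι - d) ∧ X ⊆ Yᶜ),
      tilde d f X * (x - y) ^ (X.card - d) * y ^ (Xᶜ.card - d)
      = (-1 : ℝ) ^ d * (tilde d f Y * x ^ (Yᶜ.card - d) * y ^ (Y.card - d)) := by
  set n := Fintype.card ι with hn
  have hdom : univ.filter (fun X : Finset ι =>
      (d ≤ X.card ∧ X.card ≤ n - d) ∧ X ⊆ Yᶜ)
      = Yᶜ.powerset.filter (fun X : Finset ι => d ≤ X.card ∧ X.card ≤ n - d) := by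
    ext X
    simp only [mem_filter, mem_univ, true_and, mem_powerset]
    tauto
  rw [hdom]
  -- fiberwise by cardinality
  have hfib := Finset.sum_fiberwise_of_maps_to (g := Finset.card)
    (s := Yᶜ.powerset.filter (fun X : Finset ι => d ≤ X.card ∧ X.card ≤ n - d))
    (t := Finset.Icc d (n - d))
    (fun X hX => by rw [mem_filter] at hX; rw [Finset.mem_Icc]; exact hX.2)
    (fun X => tilde d f X * (x - y) ^ (X.card - d) * y ^ (Xᶜ.card - d))
  rw [← hfib]
  have hstep : ∀ i ∈ Finset.Icc d (n - d),
      ∑ X ∈ (Yᶜ.powerset.filter (fun X : Finset ι => d ≤ X.card ∧ X.card ≤ n - d)).filter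
          (fun X => X.card = i),
        tilde d f X * (x - y) ^ (X.card - d) * y ^ (Xᶜ.card - d)
      = ((Yᶜ.card - d).choose (i - d) : ℝ) * tilde d f Yᶜ
          * ((x - y) ^ (i - d) * y ^ (n - i - d)) := by
    intro i hi
    rw [Finset.mem_Icc] at hi
    have hdom2 : (Yᶜ.powerset.filter (fun X : Finset ι => d ≤ X.card ∧ X.card ≤ n - d)).filter
        (fun X => X.card = i) = Yᶜ.powerset.filter (fun X : Finset ι => X.card = i) := by
      rw [filter_filter]
      ext X
      simp only [mem_filter, mem_powerset]
      constructor
      · rintro ⟨h1, _, h3⟩; exact ⟨h1, h3⟩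
      · rintro ⟨h1, h3⟩; exact ⟨h1, ⟨by omega, by omega⟩, h3⟩
    rw [hdom2]
    have hterm : ∀ X ∈ Yᶜ.powerset.filter (fun X : Finset ι => X.card = i),
        tilde d f X * (x - y) ^ (X.card - d) * y ^ (Xᶜ.card - d)
          = tilde d f X * ((x - y) ^ (i - d) * y ^ (n - i - d)) := by
      intro X hX
      rw [mem_filter] at hX
      rw [Finset.card_compl, ← hn, hX.2, mul_assoc]
    rw [sum_congr rfl hterm, ← Finset.sum_mul, tilde_sum f Yᶜ i hi.1]
  rw [sum_congr rfl hstep]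
  by_cases hY : d ≤ Y.card ∧ Y.card ≤ n - d
  · -- main case
    have hYn : Y.card ≤ n := Finset.card_le_univ Y
    have hYc : Yᶜ.card = n - Y.card := by rw [Finset.card_compl, hn]
    set N := Yᶜ.card - d with hN
    have htc : tilde d f Yᶜ = (-1 : ℝ) ^ d * tilde d f Y := tilde_compl hf Y
    -- pull out constants and reindex
    have hIcc : Finset.Icc d (n - d) = Finset.Ico d (n - d + 1) := by
      rw [Finset.Ico_add_one_right_eq_Icc]
    rw [hIcc, Finset.sum_Ico_eq_sum_range]
    have hrange : ∀ j ∈ Finset.range (n - d + 1 - d),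
        ((Yᶜ.card - d).choose (d + j - d) : ℝ) * tilde d f Yᶜ
          * ((x - y) ^ (d + j - d) * y ^ (n - (d + j) - d))
        = tilde d f Yᶜ * ((N.choose j : ℝ) * ((x - y) ^ j * y ^ (n - (d + j) - d))) := by
      intro j _
      rw [Nat.add_sub_cancel_left]
      ring
    rw [sum_congr rfl hrange, ← Finset.mul_sum]
    have hsub : Finset.range (N + 1) ⊆ Finset.range (n - d + 1 - d) := by
      apply Finset.range_subset_range.mpr
      omega
    rw [← Finset.sum_subset hsub (fun j _ hj => by
      rw [Finset.mem_range, not_lt] at hj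
      rw [Nat.choose_eq_zero_of_lt (by omega)]
      norm_num)]
    have hexp : ∀ j ∈ Finset.range (N + 1),
        (N.choose j : ℝ) * ((x - y) ^ j * y ^ (n - (d + j) - d))
          = (x - y) ^ j * y ^ (N - j) * (N.choose j : ℝ) * y ^ (Y.card - d) := by
      intro j hj
      rw [Finset.mem_range] at hj
      have : n - (d + j) - d = (N - j) + (Y.card - d) := by omega
      rw [this, pow_add]
      ring
    rw [sum_congr rfl hexp]
    have hbin : ∑ j ∈ Finset.range (N + 1),
        (x - y) ^ j * y ^ (N - j) * (N.choose j : ℝ) * y ^ (Y.card - d)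
        = x ^ N * y ^ (Y.card - d) := by
      rw [← Finset.sum_mul, ← add_pow (x - y) y N, sub_add_cancel]
    rw [hbin, htc]
    ring
  · -- degenerate case : both tildes vanish
    have h0 : tilde d f Yᶜ = 0 ∧ tilde d f Y = 0 := by
      rcases not_and_or.mp hY with h | h
      · push_neg at h
        have h1 : tilde d f Y = 0 := tilde_small f Y h
        have h2 : tilde d f Yᶜ = 0 := by rw [tilde_compl hf Y, h1, mul_zero]
        exact ⟨h2, h1⟩
      · push_neg at h
        have hYn : Y.card ≤ n := Finset.card_le_univ Y
        have hYc : Yᶜ.card = n - Y.card := by rw [Finset.card_compl, hn]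
        have h2 : tilde d f Yᶜ = 0 := tilde_small f Yᶜ (by omega)
        have h1 : tilde d f Y = 0 := by
          have := tilde_compl hf Yᶜ
          rw [compl_compl, h2, mul_zero] at this
          exact this
        exact ⟨h2, h1⟩
    rw [h0.2]
    rw [Finset.sum_eq_zero (fun i _ => by rw [h0.1]; ring)]
    ring


lemma tilde_eq_zero {d : ℕ} {f : Finset ι → ℝ} (hf : IsHarmonic d f) (X : Finset ι)
    (h : ¬(d ≤ X.card ∧ X.card ≤ Fintype.card ι - d)) : tilde d f X = 0 := by
  rcases not_and_or.mp h with h | h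
  · push_neg at h
    exact tilde_small f X h
  · push_neg at h
    have hXn : X.card ≤ Fintype.card ι := Finset.card_le_univ X
    have h2 : tilde d f Xᶜ = 0 := by
      apply tilde_small
      rw [Finset.card_compl]
      omega
    have := tilde_compl hf Xᶜ
    rw [compl_compl, h2, mul_zero] at this
    exact this

end AuxComb

section AuxCode

lemma mem_ker_iff_supp (C : Submodule F (ι → F)) (X : Finset ι) (c : C) :
    ((proj F X).comp C.subtype) c = 0 ↔ supp (c : ι → F) ⊆ Xᶜ := by
  simp only [LinearMap.comp_apply, Submodule.coe_subtype, proj, LinearMap.funLeft_apply,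
    supp, Finset.subset_iff, Finset.mem_compl, Finset.mem_filter, Finset.mem_univ, true_and]
  rw [funext_iff]
  constructor
  · intro h i hi hiX
    exact hi (h ⟨i, hiX⟩)
  · intro h i
    by_contra hne
    exact h ((fun hz => hne (by simpa using hz))) i.2
  
lemma sumA (C : Submodule F (ι → F)) (m : ℕ) (X : Finset ι) :
    ∑ Y ∈ Xᶜ.powerset, Acount C m Y
      = (Nat.card {c : C // supp (c : ι → F) ⊆ Xᶜ}) ^ m := by
  classical
  haveI : Fintype C := Fintype.ofFinite C
  set U : (Fin m → C) → Finset ι := fun u => Finset.univ.biUnion fun j => supp ((u j : ι → F))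
    with hU
  have hA : ∀ Y : Finset ι, Acount C m Y
      = ((univ : Finset (Fin m → C)).filter (fun u => U u = Y)).card := by
    intro Y
    rw [Acount, Nat.card_eq_fintype_card, Fintype.card_subtype]
  have h1 : ((univ : Finset (Fin m → C)).filter (fun u => U u ⊆ Xᶜ)).card
      = ∑ Y ∈ Xᶜ.powerset, ((univ : Finset (Fin m → C)).filter (fun u => U u = Y)).card := by
    rw [Finset.card_eq_sum_card_fiberwise
      (f := U) (t := Xᶜ.powerset) (fun u hu => by
        rw [mem_coe, mem_filter] at hu; rw [mem_coe, mem_powerset]; exact hu.2)]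
    refine sum_congr rfl fun Y hY => ?_
    rw [mem_powerset] at hY
    congr 1
    rw [filter_filter]
    ext u
    simp only [mem_filter, mem_univ, true_and]
    constructor
    · rintro ⟨_, h⟩; exact h
    · rintro rfl; exact ⟨hY, rfl⟩
  have h2 : ((univ : Finset (Fin m → C)).filter (fun u => U u ⊆ Xᶜ)).card
      = (Nat.card {c : C // supp (c : ι → F) ⊆ Xᶜ}) ^ m := by
    rw [← Fintype.card_subtype, ← Nat.card_eq_fintype_card]
    have hiff : ∀ u : Fin m → C, U u ⊆ Xᶜ ↔ ∀ j, supp ((u j : ι → F)) ⊆ Xᶜ := by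
      intro u
      rw [hU]
      simp [Finset.biUnion_subset]
    have e : {u : Fin m → C // U u ⊆ Xᶜ} ≃ (Fin m → {c : C // supp (c : ι → F) ⊆ Xᶜ}) :=
      (Equiv.subtypeEquivRight hiff).trans (Equiv.subtypePiEquivPi (p := fun _ c => supp ((c : C) : ι → F) ⊆ Xᶜ))
    rw [Nat.card_congr e, Nat.card_fun, Nat.card_eq_fintype_card (α := Fin m), Fintype.card_fin]
  rw [← h2, h1]
  exact sum_congr rfl fun Y _ => hA Y

lemma card_split (C : Submodule F (ι → F)) (X : Finset ι) :
    Nat.card C = Nat.card {c : C // supp (c : ι → F) ⊆ Xᶜ}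
      * Nat.card (C.map (proj F X)) := by
  set g := (proj F X).comp C.subtype with hg
  have h := Submodule.card_eq_card_quotient_mul_card (LinearMap.ker g)
  have hquot : Nat.card (C ⧸ LinearMap.ker g) = Nat.card (LinearMap.range g) :=
    Nat.card_congr g.quotKerEquivRange.toEquiv
  have hrange : LinearMap.range g = C.map (proj F X) := by
    rw [hg, LinearMap.range_comp, Submodule.range_subtype]
  have hker : Nat.card (LinearMap.ker g) = Nat.card {c : C // supp (c : ι → F) ⊆ Xᶜ} :=
    Nat.card_congr (Equiv.subtypeEquivRight (fun c => by
      rw [LinearMap.mem_ker]; exact mem_ker_iff_supp C X c))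
  rw [h, hquot, hrange, hker]

lemma card_proj_univ (C : Submodule F (ι → F)) :
    Nat.card (C.map (proj F (Finset.univ : Finset ι))) = Nat.card C := by
  have inj : Function.Injective (proj F (Finset.univ : Finset ι)) :=
    LinearMap.funLeft_injective_of_surjective F F _
      (fun i => ⟨⟨i, Finset.mem_univ i⟩, rfl⟩)
  exact (Nat.card_congr (Submodule.equivMapOfInjective _ inj C).toEquiv).symm

lemma coding (q : ℕ) (hq : Fintype.card F = q) (C : Submodule F (ι → F)) (m : ℕ)
    (X : Finset ι) :
    (q : ℝ) ^ ((m : ℝ) * (alphaC C q Finset.univ - alphaC C q X))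
      = ∑ Y ∈ Xᶜ.powerset, (Acount C m Y : ℝ) := by
  set K := Nat.card {c : C // supp (c : ι → F) ⊆ Xᶜ} with hK
  set b := Nat.card (C.map (proj F X)) with hb
  have hKpos : 0 < K := by
    rw [hK]
    have : Nonempty {c : C // supp (c : ι → F) ⊆ Xᶜ} :=
      ⟨⟨0, by simp [supp]⟩⟩
    exact Nat.card_pos
  have hbpos : 0 < b := by
    rw [hb]
    exact Nat.card_pos
  have h1q : 1 < (q : ℝ) := by
    have : 1 < Fintype.card F := Fintype.one_lt_card
    rw [hq] at this
    exact_mod_cast this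
  have halpha : alphaC C q Finset.univ - alphaC C q X = Real.logb q K := by
    rw [alphaC, alphaC, card_proj_univ, card_split C X, ← hb, ← hK]
    push_cast
    rw [Real.logb_mul (by positivity) (by positivity)]
    ring
  rw [halpha]
  have : (m : ℝ) * Real.logb q K = Real.logb q ((K : ℝ) ^ m) := by
    rw [Real.logb_pow]
  rw [this, Real.rpow_logb (by positivity) (by linarith) (by positivity)]
  rw [← Nat.cast_sum, sumA C m X]
  push_cast
  ring


end AuxCode

/-- `Z_{C,f}^{[m]}(x,y) = (-1)^d ∑_{X, d ≤ |X| ≤ n-d} f̃(X) q^{m(α_C(E)-α_C(X))}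
(x-y)^{|X|-d} y^{|E-X|-d}`. -/
theorem stmt_15 (q : ℕ) (hq : Fintype.card F = q) (C : Submodule F (ι → F))
    (m d : ℕ) (f : Finset ι → ℝ) (hf : IsHarmonic d f) (x y : ℝ) :
    Zcode C m d f x y
      = (-1 : ℝ) ^ d *
          ∑ X ∈ Finset.univ.filter
              (fun X : Finset ι => d ≤ X.card ∧ X.card ≤ Fintype.card ι - d),
            tilde d f X *
              ((q : ℝ) ^ ((m : ℝ) * (alphaC C q Finset.univ - alphaC C q X))) *
              (x - y) ^ (X.card - d) * y ^ (Xᶜ.card - d) := by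
  classical
  -- Left side: extend the sum to all subsets
  have hL : Zcode C m d f x y
      = ∑ X ∈ (univ : Finset (Finset ι)),
          tilde d f X * (Acount C m X : ℝ) * x ^ (Xᶜ.card - d) * y ^ (X.card - d) := by
    rw [Zcode]
    apply Finset.sum_subset (filter_subset _ _)
    intro X _ hX
    rw [mem_filter] at hX
    have h0 : tilde d f X = 0 := by
      apply tilde_eq_zero hf
      intro hc
      exact hX ⟨mem_univ X, hc⟩
    rw [h0]
    ring
  -- Right side: rewrite the q-power as a sum of Acounts
  have hR1 : ∀ X ∈ univ.filter
      (fun X : Finset ι => d ≤ X.card ∧ X.card ≤ Fintype.card ι - d),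
      tilde d f X * ((q : ℝ) ^ ((m : ℝ) * (alphaC C q Finset.univ - alphaC C q X))) *
          (x - y) ^ (X.card - d) * y ^ (Xᶜ.card - d)
        = ∑ Y ∈ (univ : Finset (Finset ι)),
            (if Y ⊆ Xᶜ then (Acount C m Y : ℝ) *
              (tilde d f X * (x - y) ^ (X.card - d) * y ^ (Xᶜ.card - d)) else 0) := by
    intro X _
    rw [coding q hq C m X]
    have hpw : Xᶜ.powerset = univ.filter (fun Y : Finset ι => Y ⊆ Xᶜ) := by
      ext Y
      simp [mem_powerset]
    rw [hpw, sum_filter]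
    calc tilde d f X * (∑ Y ∈ univ, if Y ⊆ Xᶜ then (Acount C m Y : ℝ) else 0) *
          (x - y) ^ (X.card - d) * y ^ (Xᶜ.card - d)
        = (∑ Y ∈ univ, if Y ⊆ Xᶜ then (Acount C m Y : ℝ) else 0) *
            (tilde d f X * (x - y) ^ (X.card - d) * y ^ (Xᶜ.card - d)) := by ring
      _ = _ := by
          rw [sum_mul]
          exact sum_congr rfl fun Y _ => by split_ifs <;> ring
  rw [Finset.sum_congr rfl hR1, Finset.sum_comm]
  -- inner sums via the key harmonic identity
  have hR3 : ∀ Y ∈ (univ : Finset (Finset ι)),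
      ∑ X ∈ univ.filter (fun X : Finset ι => d ≤ X.card ∧ X.card ≤ Fintype.card ι - d),
        (if Y ⊆ Xᶜ then (Acount C m Y : ℝ) *
          (tilde d f X * (x - y) ^ (X.card - d) * y ^ (Xᶜ.card - d)) else 0)
      = (Acount C m Y : ℝ) * ((-1 : ℝ) ^ d *
          (tilde d f Y * x ^ (Yᶜ.card - d) * y ^ (Y.card - d))) := by
    intro Y _
    have hcc : ∀ X : Finset ι, (Y ⊆ Xᶜ) ↔ (X ⊆ Yᶜ) := by
      intro X
      constructor <;> intro h a ha <;> rw [Finset.mem_compl] <;> intro hc <;>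
        exact (Finset.mem_compl.mp (h hc)) ha
    calc ∑ X ∈ univ.filter (fun X : Finset ι => d ≤ X.card ∧ X.card ≤ Fintype.card ι - d),
        (if Y ⊆ Xᶜ then (Acount C m Y : ℝ) *
          (tilde d f X * (x - y) ^ (X.card - d) * y ^ (Xᶜ.card - d)) else 0)
        = ∑ X ∈ univ.filter (fun X : Finset ι => d ≤ X.card ∧ X.card ≤ Fintype.card ι - d),
            (if X ⊆ Yᶜ then (Acount C m Y : ℝ) *
              (tilde d f X * (x - y) ^ (X.card - d) * y ^ (Xᶜ.card - d)) else 0) := by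
          exact sum_congr rfl fun X _ => by rw [if_congr (hcc X) rfl rfl]
      _ = ∑ X ∈ univ.filter (fun X : Finset ι =>
            (d ≤ X.card ∧ X.card ≤ Fintype.card ι - d) ∧ X ⊆ Yᶜ),
            (Acount C m Y : ℝ) *
              (tilde d f X * (x - y) ^ (X.card - d) * y ^ (Xᶜ.card - d)) := by
          rw [← sum_filter, filter_filter]
      _ = (Acount C m Y : ℝ) * ∑ X ∈ univ.filter (fun X : Finset ι =>
            (d ≤ X.card ∧ X.card ≤ Fintype.card ι - d) ∧ X ⊆ Yᶜ),
            tilde d f X * (x - y) ^ (X.card - d) * y ^ (Xᶜ.card - d) := by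
          rw [mul_sum]
      _ = _ := by rw [keyY hf x y Y]
  rw [Finset.sum_congr rfl hR3, hL, Finset.mul_sum]
  apply sum_congr rfl
  intro Y _
  have hsq : (-1 : ℝ) ^ d * (-1 : ℝ) ^ d = 1 := by
    rw [← mul_pow]
    norm_num
  linear_combination -(Acount C m Y : ℝ) *
    (tilde d f Y * x ^ (Yᶜ.card - d) * y ^ (Y.card - d)) * hsq
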